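/- For every integer n ≥ 1 there exists an affine map Φ : ℝ^n → ℝ^n with Φ(B_n) ⊆ B_n such that Φ^{n+1}(B_n) ⊆ int(B_n) but Φ^n(B_n) is not contained in int(B_n) (i.e., Φ is B_n-primitive with affine primitivity index exactly n+1). -/

import Mathlib

open Metric Set Function

noncomputable section AffinePrimitiveAux

/-- `b2 = √(1/2)`, the basic contraction factor. -/
def b2 : ℝ := Real.sqrt (1/2)

lemma b2_nonneg : 0 ≤ b2 := Real.sqrt_nonneg _

lemma b2_sq : b2 ^ 2 = 1/2 := Real.sq_sqrt (by norm_num)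

lemma b2_pow_sq (j : ℕ) : (b2 ^ j) ^ 2 = (1/2 : ℝ) ^ j := by
  rw [← pow_mul, mul_comm, pow_mul, b2_sq]

/-- `k`-th coordinate of a Euclidean vector, as a function on `ℕ` (junk value `0` out of range). -/
def coordx {N : ℕ} (x : EuclideanSpace ℝ (Fin N)) (k : ℕ) : ℝ :=
  if h : k < N then x ⟨k, h⟩ else 0

lemma coordx_lt {N : ℕ} (x : EuclideanSpace ℝ (Fin N)) {k : ℕ} (h : k < N) :
    coordx x k = x ⟨k, h⟩ := dif_pos h

lemma coordx_add {N : ℕ} (x y : EuclideanSpace ℝ (Fin N)) (k : ℕ) :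
    coordx (x + y) k = coordx x k + coordx y k := by
  unfold coordx
  split
  · rfl
  · simp

lemma coordx_smul {N : ℕ} (c : ℝ) (x : EuclideanSpace ℝ (Fin N)) (k : ℕ) :
    coordx (c • x) k = c * coordx x k := by
  unfold coordx
  split
  · rfl
  · simp

lemma normsq {N : ℕ} (x : EuclideanSpace ℝ (Fin N)) :
    ‖x‖ ^ 2 = ∑ k ∈ Finset.range N, (coordx x k) ^ 2 := by
  rw [EuclideanSpace.norm_eq, Real.sq_sqrt (by positivity)]
  rw [← Fin.sum_univ_eq_sum_range (fun k => (coordx x k) ^ 2) N]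
  refine Finset.sum_congr rfl fun i _ => ?_
  rw [Real.norm_eq_abs, sq_abs, coordx_lt x i.isLt, Fin.eta]

/-! ### The case `n = m + 2` -/

variable (m : ℕ)

/-- Linear part of the affine map. -/
def linFun (x : EuclideanSpace ℝ (Fin (m+2))) : EuclideanSpace ℝ (Fin (m+2)) :=
  WithLp.toLp 2 fun i => if (i : ℕ) = 0 then 0
    else if (i : ℕ) = m + 1 then (coordx x m - coordx x (m+1)) / 2
    else b2 * coordx x ((i : ℕ) - 1)

def linMap : EuclideanSpace ℝ (Fin (m+2)) →ₗ[ℝ] EuclideanSpace ℝ (Fin (m+2)) where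
  toFun := linFun m
  map_add' x y := by
    ext i
    show linFun m (x + y) i = linFun m x i + linFun m y i
    unfold linFun
    simp only [coordx_add, PiLp.toLp_apply]
    split_ifs <;> ring
  map_smul' c x := by
    ext i
    show linFun m (c • x) i = c * linFun m x i
    unfold linFun
    simp only [coordx_smul, PiLp.toLp_apply]
    split_ifs <;> ring

/-- Translation part. -/
def vvec : EuclideanSpace ℝ (Fin (m+2)) :=
  WithLp.toLp 2 fun i => if (i : ℕ) = 0 then b2 else 0

/-- The affine map realizing primitivity index `n+1` in dimension `n = m+2`. -/
def phiA : EuclideanSpace ℝ (Fin (m+2)) →ᵃ[ℝ] EuclideanSpace ℝ (Fin (m+2)) :=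
  (linMap m).toAffineMap + AffineMap.const ℝ (EuclideanSpace ℝ (Fin (m+2))) (vvec m)

lemma phi_coord (x : EuclideanSpace ℝ (Fin (m+2))) (i : Fin (m+2)) :
    phiA m x i = if (i : ℕ) = 0 then b2
      else if (i : ℕ) = m + 1 then (coordx x m - coordx x (m+1)) / 2
      else b2 * coordx x ((i : ℕ) - 1) := by
  show linFun m x i + vvec m i = _
  unfold linFun vvec
  simp only [PiLp.toLp_apply]
  split_ifs <;> ring

lemma phi_coordn (x : EuclideanSpace ℝ (Fin (m+2))) (k : ℕ) (h : k < m + 2) :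
    coordx (phiA m x) k = if k = 0 then b2
      else if k = m + 1 then (coordx x m - coordx x (m+1)) / 2
      else b2 * coordx x (k - 1) := by
  rw [coordx_lt _ h, phi_coord]

lemma phi_norm_le (x : EuclideanSpace ℝ (Fin (m+2))) :
    ‖phiA m x‖ ^ 2 ≤ 1/2 + 1/2 * ‖x‖ ^ 2 := by
  rw [normsq, normsq]
  have h0 : (coordx (phiA m x) 0) ^ 2 = 1/2 := by
    rw [phi_coordn m x 0 (by omega), if_pos rfl, b2_sq]
  have hlast : (coordx (phiA m x) (m+1)) ^ 2
      = ((coordx x m - coordx x (m+1)) / 2) ^ 2 := by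
    rw [phi_coordn m x (m+1) (by omega), if_neg (by omega), if_pos rfl]
  have hmid : ∑ k ∈ Finset.range m, (coordx (phiA m x) (k+1)) ^ 2
      = ∑ k ∈ Finset.range m, 1/2 * (coordx x k) ^ 2 := by
    refine Finset.sum_congr rfl fun k hk => ?_
    rw [Finset.mem_range] at hk
    rw [phi_coordn m x (k+1) (by omega), if_neg (by omega), if_neg (by omega),
      Nat.add_sub_cancel, mul_pow, b2_sq]
  rw [Finset.sum_range_succ', Finset.sum_range_succ, hmid, h0, hlast]
  rw [Finset.sum_range_succ, Finset.sum_range_succ]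
  have hms : (1/2 : ℝ) * (∑ k ∈ Finset.range m, (coordx x k) ^ 2)
      = ∑ k ∈ Finset.range m, 1/2 * (coordx x k) ^ 2 := by
    rw [Finset.mul_sum]
  nlinarith [hms, sq_nonneg (coordx x m + coordx x (m+1))]

lemma phi_mem (x : EuclideanSpace ℝ (Fin (m+2))) (hx : ‖x‖ ≤ 1) : ‖phiA m x‖ ≤ 1 := by
  have h := phi_norm_le m x
  nlinarith [norm_nonneg (phiA m x), norm_nonneg x]

lemma iter_norm_le (x : EuclideanSpace ℝ (Fin (m+2))) (hx : ‖x‖ ≤ 1) (k : ℕ) :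
    ‖(⇑(phiA m))^[k] x‖ ≤ 1 := by
  induction k with
  | zero => simpa
  | succ k ih =>
    rw [Function.iterate_succ_apply']
    exact phi_mem m _ ih

lemma freeze (x : EuclideanSpace ℝ (Fin (m+2))) :
    ∀ k i : ℕ, i ≤ m → i < k → coordx ((⇑(phiA m))^[k] x) i = b2 ^ (i+1) := by
  intro k
  induction k with
  | zero => intro i _ h; omega
  | succ k ih =>
    intro i him hik
    rw [Function.iterate_succ_apply', phi_coordn m _ i (by omega)]
    by_cases h0 : i = 0
    · rw [if_pos h0, h0, pow_one]
    · rw [if_neg h0, if_neg (by omega), ih (i-1) (by omega) (by omega)]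
      have h1 : i - 1 + 1 = i := by omega
      rw [h1, ← pow_succ']

lemma geom_half (M : ℕ) : ∑ k ∈ Finset.range M, (1/2 : ℝ) ^ (k+1) = 1 - (1/2) ^ M := by
  induction M with
  | zero => simp
  | succ M ih => rw [Finset.sum_range_succ, ih]; ring

lemma normsq_split (y : EuclideanSpace ℝ (Fin (m+2)))
    (hfz : ∀ i : ℕ, i ≤ m → (coordx y i) ^ 2 = (1/2 : ℝ) ^ (i+1)) :
    ‖y‖ ^ 2 = (1 - (1/2) ^ (m+1)) + (coordx y (m+1)) ^ 2 := by
  rw [normsq, Finset.sum_range_succ, ← geom_half (m+1)]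
  congr 1
  refine Finset.sum_congr rfl fun k hk => ?_
  rw [Finset.mem_range] at hk
  exact hfz k (by omega)

lemma iter_strict (x : EuclideanSpace ℝ (Fin (m+2))) (hx : ‖x‖ ≤ 1) :
    ‖(⇑(phiA m))^[m+3] x‖ < 1 := by
  have e2 : (⇑(phiA m))^[m+2] x = phiA m ((⇑(phiA m))^[m+1] x) :=
    Function.iterate_succ_apply' (⇑(phiA m)) (m+1) x
  have e3 : (⇑(phiA m))^[m+3] x = phiA m ((⇑(phiA m))^[m+2] x) :=
    Function.iterate_succ_apply' (⇑(phiA m)) (m+2) x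
  obtain ⟨y, hy⟩ : ∃ y, (⇑(phiA m))^[m+1] x = y := ⟨_, rfl⟩
  obtain ⟨z, hzd⟩ : ∃ z, phiA m y = z := ⟨_, rfl⟩
  obtain ⟨w, hwd⟩ : ∃ w, phiA m z = w := ⟨_, rfl⟩
  have hz_iter : (⇑(phiA m))^[m+2] x = z := by rw [e2, hy, hzd]
  have hw_iter : (⇑(phiA m))^[m+3] x = w := by rw [e3, hz_iter, hwd]
  have hyb : ‖y‖ ≤ 1 := by rw [← hy]; exact iter_norm_le m x hx (m+1)
  have hfrozen : ∀ i : ℕ, i ≤ m → coordx y i = b2 ^ (i+1) := by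
    intro i h
    rw [← hy]
    exact freeze m x (m+1) i h (by omega)
  have hysq : ‖y‖ ^ 2 = (1 - (1/2) ^ (m+1)) + (coordx y (m+1)) ^ 2 := by
    refine normsq_split m y fun i hi => ?_
    rw [hfrozen i hi, b2_pow_sq]
  have htsq : (coordx y (m+1)) ^ 2 ≤ (1/2) ^ (m+1) := by nlinarith [norm_nonneg y]
  have hr2 : (b2 ^ (m+1)) ^ 2 = (1/2 : ℝ) ^ (m+1) := b2_pow_sq (m+1)
  have hrpos : (0:ℝ) ≤ b2 ^ (m+1) := pow_nonneg b2_nonneg _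
  have htup : coordx y (m+1) ≤ b2 ^ (m+1) := by nlinarith
  have htlo : -(b2 ^ (m+1)) ≤ coordx y (m+1) := by nlinarith
  have hz_last : coordx z (m+1) = (b2 ^ (m+1) - coordx y (m+1)) / 2 := by
    rw [← hzd, phi_coordn m y (m+1) (by omega), if_neg (by omega), if_pos rfl,
      hfrozen m (le_refl m)]
  have hz_lo : 0 ≤ coordx z (m+1) := by rw [hz_last]; linarith
  have hz_up : coordx z (m+1) ≤ b2 ^ (m+1) := by rw [hz_last]; linarith
  have hzm : coordx z m = b2 ^ (m+1) := by
    rw [← hz_iter]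
    exact freeze m x (m+2) m (le_refl m) (by omega)
  have hw_last : coordx w (m+1) = (b2 ^ (m+1) - coordx z (m+1)) / 2 := by
    rw [← hwd, phi_coordn m z (m+1) (by omega), if_neg (by omega), if_pos rfl, hzm]
  have hw_frozen : ∀ i : ℕ, i ≤ m → coordx w i = b2 ^ (i+1) := by
    intro i h
    rw [← hw_iter]
    exact freeze m x (m+3) i h (by omega)
  have hwsq : ‖w‖ ^ 2 = (1 - (1/2) ^ (m+1)) + (coordx w (m+1)) ^ 2 := by
    refine normsq_split m w fun i hi => ?_
    rw [hw_frozen i hi, b2_pow_sq]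
  have hwlo : 0 ≤ coordx w (m+1) := by rw [hw_last]; linarith
  have hwup : coordx w (m+1) ≤ b2 ^ (m+1) / 2 := by rw [hw_last]; linarith
  have hppos : (0:ℝ) < (1/2) ^ (m+1) := by positivity
  have hwsq2 : (coordx w (m+1)) ^ 2 ≤ (b2 ^ (m+1) / 2) ^ 2 :=
    pow_le_pow_left₀ hwlo hwup 2
  have hq : (b2 ^ (m+1) / 2) ^ 2 = (1/2 : ℝ) ^ (m+1) / 4 := by
    rw [div_pow, hr2]; norm_num
  have hfinal : ‖w‖ ^ 2 < 1 := by rw [hwsq]; rw [hq] at hwsq2; linarith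
  rw [hw_iter]
  exact lt_of_pow_lt_pow_left₀ 2 zero_le_one (by rw [one_pow]; exact hfinal)

/-- The witness orbit: `XJ m j` is the `j`-th point of the boundary-touching orbit. -/
def XJ (j : ℕ) : EuclideanSpace ℝ (Fin (m+2)) :=
  WithLp.toLp 2 fun i => (-1 : ℝ) ^ ((i : ℕ) + 1 - j) * b2 ^ (min ((i : ℕ) + 1) (m+1))

lemma XJ_coord (j k : ℕ) (h : k < m + 2) :
    coordx (XJ m j) k = (-1 : ℝ) ^ (k + 1 - j) * b2 ^ (min (k+1) (m+1)) := by
  rw [coordx_lt _ h]; rfl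

lemma XJ_sq (j k : ℕ) (h : k < m + 2) :
    (coordx (XJ m j) k) ^ 2 = (1/2 : ℝ) ^ (min (k+1) (m+1)) := by
  rw [XJ_coord m j k h, mul_pow, b2_pow_sq, ← pow_mul, mul_comm (k+1-j) 2, pow_mul]
  norm_num

lemma XJ_normsq (j : ℕ) : ‖XJ m j‖ ^ 2 = 1 := by
  have h : ‖XJ m j‖ ^ 2 = (1 - (1/2) ^ (m+1)) + (coordx (XJ m j) (m+1)) ^ 2 := by
    refine normsq_split m _ fun i hi => ?_
    rw [XJ_sq m j i (by omega)]
    congr 1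
    omega
  rw [h, XJ_sq m j (m+1) (by omega)]
  have h2 : min (m+1+1) (m+1) = m+1 := by omega
  rw [h2]; ring

lemma XJ_step (j : ℕ) (hj : j ≤ m + 1) : phiA m (XJ m j) = XJ m (j+1) := by
  ext i
  rw [phi_coord]
  show _ = (-1 : ℝ) ^ ((i : ℕ) + 1 - (j+1)) * b2 ^ (min ((i : ℕ) + 1) (m+1))
  have hkm : (i : ℕ) < m + 2 := i.isLt
  by_cases h0 : (i : ℕ) = 0
  · rw [if_pos h0, h0]
    have e1 : 0 + 1 - (j+1) = 0 := by omega
    have e2 : min (0+1) (m+1) = 1 := by omega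
    rw [e1, e2, pow_zero, pow_one, one_mul]
  · by_cases hlast : (i : ℕ) = m + 1
    · rw [if_neg h0, if_pos hlast, hlast]
      rw [XJ_coord m j m (by omega), XJ_coord m j (m+1) (by omega)]
      have e1 : min (m+1) (m+1) = m+1 := by omega
      have e2 : min (m+1+1) (m+1) = m+1 := by omega
      have e3 : m + 1 + 1 - j = (m + 1 - j) + 1 := by omega
      have e4 : m + 1 + 1 - (j+1) = m + 1 - j := by omega
      rw [e1, e2, e3, e4, pow_succ]
      ring
    · rw [if_neg h0, if_neg hlast]
      rw [XJ_coord m j ((i:ℕ)-1) (by omega)]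
      have e1 : (i:ℕ) - 1 + 1 = (i:ℕ) := by omega
      have e2 : min ((i:ℕ)) (m+1) = (i:ℕ) := by omega
      have e3 : min ((i:ℕ)+1) (m+1) = (i:ℕ)+1 := by omega
      have e4 : (i:ℕ) + 1 - (j+1) = (i:ℕ) - j := by omega
      rw [e1, e2, e3, e4, pow_succ]
      ring

lemma XJ_iter : ∀ j : ℕ, j ≤ m + 2 → (⇑(phiA m))^[j] (XJ m 0) = XJ m j := by
  intro j
  induction j with
  | zero => intro _; rfl
  | succ j ih =>
    intro hj
    rw [Function.iterate_succ_apply', ih (by omega), XJ_step m j (by omega)]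

theorem case_ge_two (m : ℕ) :
    ∃ Φ : EuclideanSpace ℝ (Fin (m+2)) →ᵃ[ℝ] EuclideanSpace ℝ (Fin (m+2)),
      (∀ x ∈ closedBall (0 : EuclideanSpace ℝ (Fin (m+2))) 1, Φ x ∈ closedBall 0 1) ∧
      (∀ x ∈ closedBall (0 : EuclideanSpace ℝ (Fin (m+2))) 1,
        (⇑Φ)^[m + 2 + 1] x ∈ interior (closedBall (0 : EuclideanSpace ℝ (Fin (m+2))) 1)) ∧
      ¬ (∀ x ∈ closedBall (0 : EuclideanSpace ℝ (Fin (m+2))) 1,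
        (⇑Φ)^[m + 2] x ∈ interior (closedBall (0 : EuclideanSpace ℝ (Fin (m+2))) 1)) := by
  refine ⟨phiA m, ?_, ?_, ?_⟩
  · intro x hx
    rw [mem_closedBall_zero_iff] at *
    exact phi_mem m x hx
  · intro x hx
    rw [mem_closedBall_zero_iff] at hx
    rw [interior_closedBall _ one_ne_zero, mem_ball_zero_iff]
    exact iter_strict m x hx
  · intro hcon
    have hmem : XJ m 0 ∈ closedBall (0 : EuclideanSpace ℝ (Fin (m+2))) 1 := by
      rw [mem_closedBall_zero_iff]
      nlinarith [XJ_normsq m 0, norm_nonneg (XJ m 0)]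
    have h1 := hcon (XJ m 0) hmem
    rw [XJ_iter m (m+2) (le_refl _), interior_closedBall _ one_ne_zero,
      mem_ball_zero_iff] at h1
    have h3 : ‖XJ m (m+2)‖ ^ 2 < 1 := pow_lt_one₀ (norm_nonneg _) h1 two_ne_zero
    linarith [XJ_normsq m (m+2)]

/-! ### The case `n = 1` -/

def lin1 : EuclideanSpace ℝ (Fin 1) →ₗ[ℝ] EuclideanSpace ℝ (Fin 1) where
  toFun x := WithLp.toLp 2 fun _ => -(x 0) / 2
  map_add' x y := by
    ext i
    show -((x + y) 0) / 2 = -(x 0) / 2 + -(y 0) / 2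
    show -(x 0 + y 0) / 2 = -(x 0) / 2 + -(y 0) / 2
    ring
  map_smul' c x := by
    ext i
    show -((c • x) 0) / 2 = c * (-(x 0) / 2)
    show -(c * x 0) / 2 = c * (-(x 0) / 2)
    ring

def v1 : EuclideanSpace ℝ (Fin 1) := WithLp.toLp 2 fun _ => 1/2

def phi1 : EuclideanSpace ℝ (Fin 1) →ᵃ[ℝ] EuclideanSpace ℝ (Fin 1) :=
  lin1.toAffineMap + AffineMap.const ℝ (EuclideanSpace ℝ (Fin 1)) v1

lemma phi1_apply (x : EuclideanSpace ℝ (Fin 1)) (i : Fin 1) :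
    phi1 x i = -(x 0) / 2 + 1/2 := rfl

lemma normsq1 (x : EuclideanSpace ℝ (Fin 1)) : ‖x‖ ^ 2 = (x 0) ^ 2 := by
  rw [normsq, Finset.sum_range_one, coordx_lt x (by norm_num : (0:ℕ) < 1)]
  rfl

theorem case_one :
    ∃ Φ : EuclideanSpace ℝ (Fin 1) →ᵃ[ℝ] EuclideanSpace ℝ (Fin 1),
      (∀ x ∈ closedBall (0 : EuclideanSpace ℝ (Fin 1)) 1, Φ x ∈ closedBall 0 1) ∧
      (∀ x ∈ closedBall (0 : EuclideanSpace ℝ (Fin 1)) 1,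
        (⇑Φ)^[1 + 1] x ∈ interior (closedBall (0 : EuclideanSpace ℝ (Fin 1)) 1)) ∧
      ¬ (∀ x ∈ closedBall (0 : EuclideanSpace ℝ (Fin 1)) 1,
        (⇑Φ)^[1] x ∈ interior (closedBall (0 : EuclideanSpace ℝ (Fin 1)) 1)) := by
  refine ⟨phi1, ?_, ?_, ?_⟩
  · intro x hx
    rw [mem_closedBall_zero_iff] at hx ⊢
    have h1 := normsq1 x
    have h2 := normsq1 (phi1 x)
    rw [phi1_apply] at h2
    nlinarith [norm_nonneg (phi1 x), norm_nonneg x, sq_nonneg (x 0 + 1),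
      sq_nonneg (x 0 - 1), sq_nonneg (‖phi1 x‖ - 1)]
  · intro x hx
    rw [mem_closedBall_zero_iff] at hx
    rw [interior_closedBall _ one_ne_zero, mem_ball_zero_iff]
    have hit : (⇑phi1)^[1+1] x = phi1 (phi1 x) := by
      rw [Function.iterate_succ_apply', Function.iterate_one]
    rw [hit]
    have h1 := normsq1 x
    have h2 := normsq1 (phi1 (phi1 x))
    rw [phi1_apply, phi1_apply] at h2
    nlinarith [norm_nonneg (phi1 (phi1 x)), norm_nonneg x, sq_nonneg (x 0 + 1),
      sq_nonneg (x 0 - 1), sq_nonneg (‖phi1 (phi1 x)‖ - 1)]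
  · intro hcon
    set c : EuclideanSpace ℝ (Fin 1) := WithLp.toLp 2 (fun _ => -1) with hc
    have hmem : c ∈ closedBall (0 : EuclideanSpace ℝ (Fin 1)) 1 := by
      rw [mem_closedBall_zero_iff]
      have h1 := normsq1 c
      have hc0 : c 0 = -1 := rfl
      rw [hc0] at h1
      nlinarith [norm_nonneg c]
    have h := hcon c hmem
    rw [Function.iterate_one, interior_closedBall _ one_ne_zero, mem_ball_zero_iff] at h
    have h2 := normsq1 (phi1 c)
    rw [phi1_apply] at h2
    have hc0 : c 0 = -1 := rfl
    rw [hc0] at h2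
    have h3 : ‖phi1 c‖ ^ 2 < 1 := pow_lt_one₀ (norm_nonneg _) h two_ne_zero
    norm_num at h2
    rcases h2 with h2 | h2 <;> linarith [norm_nonneg (phi1 c)]

end AffinePrimitiveAux

/-- For every `n ≥ 1` there is an affine self-map of `ℝ^n` mapping the closed unit
ball `B_n` into itself whose `(n+1)`-st iterate maps `B_n` into the interior of
`B_n`, but whose `n`-th iterate does not. -/
theorem exists_affine_primitive_index_eq (n : ℕ) (hn : 1 ≤ n) :
    ∃ Φ : EuclideanSpace ℝ (Fin n) →ᵃ[ℝ] EuclideanSpace ℝ (Fin n),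
      (∀ x ∈ closedBall (0 : EuclideanSpace ℝ (Fin n)) 1, Φ x ∈ closedBall 0 1) ∧
      (∀ x ∈ closedBall (0 : EuclideanSpace ℝ (Fin n)) 1,
        (⇑Φ)^[n + 1] x ∈ interior (closedBall (0 : EuclideanSpace ℝ (Fin n)) 1)) ∧
      ¬ (∀ x ∈ closedBall (0 : EuclideanSpace ℝ (Fin n)) 1,
        (⇑Φ)^[n] x ∈ interior (closedBall (0 : EuclideanSpace ℝ (Fin n)) 1)) := by
  obtain ⟨k, rfl⟩ : ∃ k, n = k + 1 := ⟨n - 1, by omega⟩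
  cases k with
  | zero => exact case_one
  | succ k => exact case_ge_two k
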